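/- For any two n×n singular real symmetric matrices A and B, there exists an invertible real matrix U such that UᵀAU = diag(A₁, 0_{n-p}) with A₁ a p×p nonsingular diagonal matrix, and UᵀBU has the block form [[𝓑₁, 0, 𝓑₂],[0, 𝓑₃, 0],[𝓑₂ᵀ, 0, 0]] where 𝓑₁ is p×p, 𝓑₃ is a q×q nonsingular diagonal matrix, 𝓑₂ is p×r, and p + q + r = n (with p, q, r ≥ 0). -/

import Mathlib

open Matrix

lemma diagonal_sum_eq {α β R : Type*} [Fintype α] [Fintype β] [DecidableEq α] [DecidableEq β]
    [Zero R] (v : α ⊕ β → R) :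
    diagonal v = fromBlocks (diagonal (v ∘ Sum.inl)) 0 0 (diagonal (v ∘ Sum.inr)) := by
  ext (i | i) (j | j) <;> simp [diagonal_apply]

lemma cong_diag {m : ℕ} (S : Matrix (Fin m) (Fin m) ℝ) (hS : S.IsSymm) :
    ∃ (q r : ℕ) (hqr : q + r = m) (e : Fin m ≃ (Fin q ⊕ Fin r))
      (V : Matrix (Fin m) (Fin m) ℝ) (D : Matrix (Fin q) (Fin q) ℝ),
      IsUnit V ∧ D.IsDiag ∧ IsUnit D ∧
      (Vᵀ * S * V).submatrix e.symm e.symm = fromBlocks D 0 0 0 := by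
  classical
  have hH : S.IsHermitian := by
    rw [Matrix.IsHermitian, conjTranspose_eq_transpose_of_trivial]; exact hS
  set d : Fin m → ℝ := hH.eigenvalues with hd
  set V : Matrix (Fin m) (Fin m) ℝ := (hH.eigenvectorUnitary : Matrix (Fin m) (Fin m) ℝ) with hVdef
  have hV1 : star V * V = 1 := (Matrix.mem_unitaryGroup_iff').mp hH.eigenvectorUnitary.2
  have hV2 : V * star V = 1 := (Matrix.mem_unitaryGroup_iff).mp hH.eigenvectorUnitary.2
  have hstarV : star V = Vᵀ := by
    rw [star_eq_conjTranspose, conjTranspose_eq_transpose_of_trivial]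
  have hdiag : Vᵀ * S * V = diagonal d := by
    have hs := hH.spectral_theorem
    have h0 : (RCLike.ofReal ∘ d : Fin m → ℝ) = d := by funext i; simp
    rw [h0, Unitary.conjStarAlgAut_apply, ← hVdef] at hs
    rw [← hstarV, hs,
      show star V * (V * diagonal d * star V) * V
          = (star V * V) * diagonal d * (star V * V) by noncomm_ring,
      hV1, one_mul, mul_one]
  set P : Fin m → Prop := fun i => d i ≠ 0 with hP
  set q := Fintype.card {i // P i}
  set r := Fintype.card {i // ¬ P i}
  have hqr : q + r = m := by
    have h1 := Fintype.card_congr (Equiv.sumCompl P)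
    rw [Fintype.card_sum, Fintype.card_fin] at h1
    exact h1
  set e : Fin m ≃ (Fin q ⊕ Fin r) :=
    (Equiv.sumCompl P).symm.trans
      (Equiv.sumCongr (Fintype.equivFin {i // P i}) (Fintype.equivFin {i // ¬ P i})) with he
  have hL : ∀ i : Fin q, d (e.symm (Sum.inl i)) ≠ 0 := by
    intro i
    have : e.symm (Sum.inl i) = ((Fintype.equivFin {i // P i}).symm i : Fin m) := by
      simp [he]
    rw [this]
    exact ((Fintype.equivFin {i // P i}).symm i).2
  have hR : ∀ i : Fin r, d (e.symm (Sum.inr i)) = 0 := by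
    intro i
    have : e.symm (Sum.inr i) = ((Fintype.equivFin {i // ¬ P i}).symm i : Fin m) := by
      simp [he]
    rw [this]
    have := ((Fintype.equivFin {i // ¬ P i}).symm i).2
    simpa [hP] using this
  refine ⟨q, r, hqr, e, V, diagonal (fun i => d (e.symm (Sum.inl i))), ?_, isDiag_diagonal _,
    ?_, ?_⟩
  · exact ⟨⟨V, star V, hV2, hV1⟩, rfl⟩
  · rw [Matrix.isUnit_diagonal]
    exact ⟨⟨_, fun i => (d (e.symm (Sum.inl i)))⁻¹,
      funext fun i => mul_inv_cancel₀ (hL i), funext fun i => inv_mul_cancel₀ (hL i)⟩, rfl⟩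
  · rw [hdiag, submatrix_diagonal_equiv, diagonal_sum_eq,
      show ((d ∘ ⇑e.symm) ∘ Sum.inr) = (0 : Fin r → ℝ) from funext hR,
      show (diagonal (0 : Fin r → ℝ)) = 0 from diagonal_zero]
    rfl

lemma submatrix_fromBlocks_map {α β α' β' γ δ γ' δ' R : Type*}
    (A : Matrix α γ R) (B : Matrix α δ R) (C : Matrix β γ R) (D : Matrix β δ R)
    (f : α' → α) (g : β' → β) (f' : γ' → γ) (g' : δ' → δ) :
    (fromBlocks A B C D).submatrix (Sum.map f g) (Sum.map f' g') =
      fromBlocks (A.submatrix f f') (B.submatrix f g') (C.submatrix g f') (D.submatrix g g') := by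
  ext (i | i) (j | j) <;> rfl

lemma submatrix_equiv_cancel {ι κ R : Type*} (e : ι ≃ κ) (M : Matrix ι ι R) :
    (M.submatrix ⇑e.symm ⇑e.symm).submatrix ⇑e ⇑e = M := by
  simp [submatrix_submatrix]

lemma congr_submatrix' {ι κ R : Type*} [Fintype ι] [Fintype κ] [NonUnitalNonAssocSemiring R]
    (e : ι ≃ κ) (M P : Matrix κ κ R) :
    (P.submatrix ⇑e ⇑e)ᵀ * M.submatrix ⇑e ⇑e * P.submatrix ⇑e ⇑e = (Pᵀ * M * P).submatrix ⇑e ⇑e := by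
  rw [transpose_submatrix, submatrix_mul_equiv Pᵀ M e e e, submatrix_mul_equiv _ P e e e]

lemma conj_submatrix {ι κ R : Type*} [Fintype ι] [Fintype κ] [NonUnitalNonAssocSemiring R]
    (e : ι ≃ κ) (X : Matrix ι ι R) (P : Matrix κ κ R) :
    ((P.submatrix ⇑e ⇑e)ᵀ * X * P.submatrix ⇑e ⇑e).submatrix ⇑e.symm ⇑e.symm
      = Pᵀ * X.submatrix ⇑e.symm ⇑e.symm * P := by
  conv_lhs => rw [show X = (X.submatrix ⇑e.symm ⇑e.symm).submatrix ⇑e ⇑e from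
    (submatrix_equiv_cancel e X).symm]
  rw [congr_submatrix', submatrix_submatrix]
  simp

lemma isSymm_conj {m : Type*} [Fintype m] {R : Type*} [CommSemiring R]
    {M : Matrix m m R} (h : M.IsSymm) (N : Matrix m m R) : (Nᵀ * M * N).IsSymm := by
  unfold Matrix.IsSymm at *
  rw [transpose_mul, transpose_mul, transpose_transpose, h, mul_assoc]

lemma isSymm_submatrix {ι κ R : Type*} {M : Matrix ι ι R} (h : M.IsSymm) (f : κ → ι) :
    (M.submatrix f f).IsSymm := by
  unfold Matrix.IsSymm at *
  rw [transpose_submatrix, h]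

lemma toBlocks₂₁_of_isSymm {α β R : Type*} {M : Matrix (α ⊕ β) (α ⊕ β) R} (h : M.IsSymm) :
    M.toBlocks₂₁ = M.toBlocks₁₂ᵀ := by
  ext i j
  exact (congrFun (congrFun h (Sum.inr i)) (Sum.inl j)).symm

lemma toBlocks₂₂_of_isSymm {α β R : Type*} {M : Matrix (α ⊕ β) (α ⊕ β) R} (h : M.IsSymm) :
    M.toBlocks₂₂.IsSymm := by
  ext i j
  exact congrFun (congrFun h (Sum.inr i)) (Sum.inr j)

theorem stmt_5 (n : ℕ) (A B : Matrix (Fin n) (Fin n) ℝ)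
    (hAs : A.IsSymm) (hBs : B.IsSymm)
    (hA : ¬ IsUnit A) (hB : ¬ IsUnit B) :
    ∃ (U : Matrix (Fin n) (Fin n) ℝ), IsUnit U ∧
      ∃ (p q r : ℕ) (hpqr : p + q + r = n)
        (e : Fin n ≃ (Fin p ⊕ (Fin q ⊕ Fin r)))
        (A₁ : Matrix (Fin p) (Fin p) ℝ)
        (B₁ : Matrix (Fin p) (Fin p) ℝ)
        (B₂ : Matrix (Fin p) (Fin r) ℝ)
        (B₃ : Matrix (Fin q) (Fin q) ℝ),
        A₁.IsDiag ∧ IsUnit A₁ ∧ B₃.IsDiag ∧ IsUnit B₃ ∧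
        (Uᵀ * A * U).submatrix e.symm e.symm = fromBlocks A₁ 0 0 0 ∧
        (Uᵀ * B * U).submatrix e.symm e.symm =
          fromBlocks B₁ (fromCols 0 B₂) (fromRows 0 B₂ᵀ) (fromBlocks B₃ 0 0 0) := by
  classical
  obtain ⟨p, m, hpm, e₁, U₁, A₁, hU₁u, hA₁d, hA₁u, hA'⟩ := cong_diag A hAs
  set B' : Matrix (Fin p ⊕ Fin m) (Fin p ⊕ Fin m) ℝ :=
    (U₁ᵀ * B * U₁).submatrix ⇑e₁.symm ⇑e₁.symm with hB'def
  have hB'symm : B'.IsSymm := isSymm_submatrix (isSymm_conj hBs U₁) _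
  obtain ⟨q, r, hqr, e₂, V, B₃, hVu, hB₃d, hB₃u, hV⟩ :=
    cong_diag B'.toBlocks₂₂ (toBlocks₂₂_of_isSymm hB'symm)
  set s : (Fin p ⊕ Fin m) ≃ (Fin p ⊕ (Fin q ⊕ Fin r)) :=
    Equiv.sumCongr (Equiv.refl (Fin p)) e₂ with hs
  set e : Fin n ≃ (Fin p ⊕ (Fin q ⊕ Fin r)) := e₁.trans s with he
  have hssymm : ⇑s.symm = Sum.map (id : Fin p → Fin p) ⇑e₂.symm := by
    funext x; cases x <;> simp [hs]
  have hesymm : ⇑e.symm = ⇑e₁.symm ∘ ⇑s.symm := by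
    funext x; simp [he]
  set V₂ : Matrix (Fin q ⊕ Fin r) (Fin q ⊕ Fin r) ℝ := V.submatrix ⇑e₂.symm ⇑e₂.symm with hV₂
  set b11 := B'.toBlocks₁₁ with hb11
  set b12 := B'.toBlocks₁₂ with hb12
  set b21 := B'.toBlocks₂₁ with hb21
  set b22 := B'.toBlocks₂₂ with hb22
  set DD : Matrix (Fin q ⊕ Fin r) (Fin q ⊕ Fin r) ℝ := fromBlocks B₃ 0 0 0 with hDD
  have hVDV : V₂ᵀ * b22.submatrix ⇑e₂.symm ⇑e₂.symm * V₂ = DD := by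
    rw [hV₂, congr_submatrix' e₂.symm]
    exact hV
  set Me : Matrix (Fin p ⊕ (Fin q ⊕ Fin r)) (Fin p ⊕ (Fin q ⊕ Fin r)) ℝ :=
    B'.submatrix ⇑s.symm ⇑s.symm with hMe
  have hMesymm : Me.IsSymm := isSymm_submatrix hB'symm _
  have hMeB : Me = fromBlocks b11 (b12.submatrix id ⇑e₂.symm)
      (b21.submatrix ⇑e₂.symm id) (b22.submatrix ⇑e₂.symm ⇑e₂.symm) := by
    ext (i | i) (j | j) <;> rfl
  set C : Matrix (Fin p) (Fin q ⊕ Fin r) ℝ := (b12.submatrix id ⇑e₂.symm) * V₂ with hC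
  set cl : Matrix (Fin q ⊕ Fin r) (Fin p) ℝ := V₂ᵀ * (b21.submatrix ⇑e₂.symm id) with hcl
  set C1 := C.toCols₁ with hC1
  set C2 := C.toCols₂ with hC2
  set W : Matrix (Fin p ⊕ (Fin q ⊕ Fin r)) (Fin p ⊕ (Fin q ⊕ Fin r)) ℝ :=
    fromBlocks 1 0 0 V₂ with hW
  have hWT : Wᵀ = fromBlocks 1 0 0 V₂ᵀ := by
    rw [hW, fromBlocks_transpose]; simp
  have hG : Wᵀ * Me * W = fromBlocks b11 C cl DD := by
    rw [hWT, hMeB, hW, fromBlocks_multiply, fromBlocks_multiply, hC, hcl, ← hVDV]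
    simp [Matrix.mul_assoc]
  set X1 : Matrix (Fin q) (Fin p) ℝ := -(B₃⁻¹ * C1ᵀ) with hX1
  set X : Matrix (Fin q ⊕ Fin r) (Fin p) ℝ := fromRows X1 0 with hX
  set T : Matrix (Fin p ⊕ (Fin q ⊕ Fin r)) (Fin p ⊕ (Fin q ⊕ Fin r)) ℝ :=
    fromBlocks 1 0 X 1 with hT
  have hTt : Tᵀ = fromBlocks 1 Xᵀ 0 1 := by
    rw [hT, fromBlocks_transpose]; simp
  have hB₃det : IsUnit B₃.det := (Matrix.isUnit_iff_isUnit_det B₃).mp hB₃u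
  have hB₃symm : B₃ᵀ = B₃ := hB₃d.isSymm
  have hCX : C + Xᵀ * DD = fromCols 0 C2 := by
    have hXt : Xᵀ = fromCols X1ᵀ 0 := by
      rw [hX, transpose_fromRows]; simp
    have hX1t : X1ᵀ * B₃ = -C1 := by
      rw [hX1, transpose_neg, transpose_mul, transpose_transpose, transpose_nonsing_inv,
        hB₃symm, Matrix.neg_mul, Matrix.nonsing_inv_mul_cancel_right _ _ hB₃det]
    rw [hXt, hDD, fromCols_mul_fromBlocks]
    rw [show C = fromCols C1 C2 from (fromCols_toCols C).symm]
    ext i (j | j) <;> simp [fromCols, hX1t]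
  have hprod : Tᵀ * (fromBlocks b11 C cl DD) * T =
      fromBlocks (b11 + Xᵀ * cl + (C + Xᵀ * DD) * X) (C + Xᵀ * DD) (cl + DD * X) DD := by
    rw [hTt, hT, fromBlocks_multiply, fromBlocks_multiply]
    simp [Matrix.add_mul]
  have hFsymm : (fromBlocks (b11 + Xᵀ * cl + (C + Xᵀ * DD) * X) (C + Xᵀ * DD)
      (cl + DD * X) DD).IsSymm := by
    rw [← hprod, ← hG]
    exact isSymm_conj (isSymm_conj hMesymm W) T
  have h21 : cl + DD * X = fromRows 0 C2ᵀ := by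
    have := toBlocks₂₁_of_isSymm hFsymm
    simp only [toBlocks_fromBlocks₂₁, toBlocks_fromBlocks₁₂] at this
    rw [this, hCX, transpose_fromCols, transpose_zero]
  -- the transformation matrix
  set N : Matrix (Fin n) (Fin n) ℝ := (W * T).submatrix ⇑e ⇑e with hN
  set U : Matrix (Fin n) (Fin n) ℝ := U₁ * N with hU
  have hconj : ∀ M : Matrix (Fin n) (Fin n) ℝ,
      (Uᵀ * M * U).submatrix ⇑e.symm ⇑e.symm =
        (W * T)ᵀ * ((U₁ᵀ * M * U₁).submatrix ⇑e.symm ⇑e.symm) * (W * T) := by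
    intro M
    have h1 : Uᵀ * M * U = Nᵀ * (U₁ᵀ * M * U₁) * N := by
      rw [hU, transpose_mul]
      simp only [Matrix.mul_assoc]
    rw [h1, hN, conj_submatrix]
  -- A part
  have hAr : (U₁ᵀ * A * U₁).submatrix ⇑e.symm ⇑e.symm = fromBlocks A₁ 0 0 0 := by
    rw [hesymm, ← submatrix_submatrix, hA', hssymm, submatrix_fromBlocks_map]
    simp
  have hAfin : (W * T)ᵀ * (fromBlocks A₁ 0 0 0) * (W * T) = fromBlocks A₁ 0 0 0 := by
    rw [transpose_mul, hTt, hWT, hW, hT, fromBlocks_multiply, fromBlocks_multiply,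
      fromBlocks_multiply, fromBlocks_multiply]
    simp
  -- B part
  have hMe' : (U₁ᵀ * B * U₁).submatrix ⇑e.symm ⇑e.symm = Me := by
    rw [hesymm, ← submatrix_submatrix, ← hB'def, hMe]
  have hBfin : (W * T)ᵀ * Me * (W * T) =
      fromBlocks (b11 + Xᵀ * cl + (C + Xᵀ * DD) * X) (fromCols 0 C2) (fromRows 0 C2ᵀ) DD := by
    calc (W * T)ᵀ * Me * (W * T) = Tᵀ * (Wᵀ * Me * W) * T := by
          rw [transpose_mul]; simp only [Matrix.mul_assoc]
      _ = Tᵀ * (fromBlocks b11 C cl DD) * T := by rw [hG]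
      _ = fromBlocks (b11 + Xᵀ * cl + (C + Xᵀ * DD) * X) (C + Xᵀ * DD) (cl + DD * X) DD := hprod
      _ = _ := by rw [hCX, h21]
  -- units
  have hVdet : IsUnit V.det := (Matrix.isUnit_iff_isUnit_det V).mp hVu
  have hV₂u : IsUnit V₂.det := by
    rw [hV₂, det_submatrix_equiv_self e₂.symm]; exact hVdet
  have hWu : IsUnit W.det := by
    rw [hW, det_fromBlocks_zero₂₁, det_one, one_mul]; exact hV₂u
  have hTu : IsUnit T.det := by
    rw [hT, det_fromBlocks_zero₁₂, det_one, one_mul, det_one]; exact isUnit_one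
  have hNu : IsUnit N := by
    rw [Matrix.isUnit_iff_isUnit_det, hN, det_submatrix_equiv_self e, det_mul]
    exact hWu.mul hTu
  refine ⟨U, hU₁u.mul hNu, p, q, r, by omega, e, A₁,
    b11 + Xᵀ * cl + (C + Xᵀ * DD) * X, C2, B₃, hA₁d, hA₁u, hB₃d, hB₃u, ?_, ?_⟩
  · rw [hconj A, hAr, hAfin]
  · rw [hconj B, hMe', hBfin, hDD]
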